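/- Let F0 and A be n×n real symmetric matrices with F0 positive definite. Then every complex root of the univariate polynomial t ↦ det(F0 + t·A) (a polynomial in ℝ[t], with roots taken in ℂ) is real. -/

import Mathlib

open scoped Matrix

/-- Let `F0` and `A` be `n × n` real symmetric matrices with `F0`
positive definite. Then every complex root of the univariate polynomial
`t ↦ det (F0 + t • A)` (a polynomial in `ℝ[t]`, roots taken in `ℂ`) is real. -/
theorem stmt0 (n : ℕ) (F0 A : Matrix (Fin n) (Fin n) ℝ)
    (hF0symm : F0.IsSymm) (hAsymm : A.IsSymm) (hF0 : F0.PosDef) :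
    ∀ z : ℂ,
      (((F0.map (Polynomial.C : ℝ → Polynomial ℝ) +
          (Polynomial.X : Polynomial ℝ) • A.map Polynomial.C).det).map
        (algebraMap ℝ ℂ)).IsRoot z → z.im = 0 := by
  intro z hz
  classical
  set φ := algebraMap ℝ ℂ with hφ
  set ψ : Polynomial ℝ →+* ℂ := Polynomial.eval₂RingHom φ z with hψ
  have hdet : (F0.map φ + z • A.map φ).det = 0 := by
    have h1 : ψ ((F0.map (Polynomial.C : ℝ → Polynomial ℝ) + (Polynomial.X : Polynomial ℝ) • A.map Polynomial.C).det) = 0 := by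
      simpa [ψ, Polynomial.IsRoot, Polynomial.eval_map] using hz
    rw [RingHom.map_det] at h1
    have h2 : (F0.map (Polynomial.C : ℝ → Polynomial ℝ) + (Polynomial.X : Polynomial ℝ) • A.map Polynomial.C).map ψ
        = F0.map φ + z • A.map φ := by
      ext i j
      simp only [ψ, Matrix.map_apply, Matrix.add_apply, Matrix.smul_apply, smul_eq_mul,
        Polynomial.coe_eval₂RingHom, Polynomial.eval₂_add, Polynomial.eval₂_mul,
        Polynomial.eval₂_C, Polynomial.eval₂_X]
    rw [← h2, ← RingHom.mapMatrix_apply]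
    exact h1
  obtain ⟨v, hv0, hv⟩ := Matrix.exists_mulVec_eq_zero_iff.2 hdet
  set a : ℂ := star v ⬝ᵥ (F0.map φ) *ᵥ v with ha
  set b : ℂ := star v ⬝ᵥ (A.map φ) *ᵥ v with hb
  have key : a + z * b = 0 := by
    have h := congrArg (fun w => star v ⬝ᵥ w) hv
    simpa [a, b, Matrix.add_mulVec, Matrix.smul_mulVec, dotProduct_add,
      dotProduct_smul, smul_eq_mul] using h
  -- realness of hermitian quadratic forms
  have hherm : ∀ M : Matrix (Fin n) (Fin n) ℝ, M.IsSymm →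
      (star v ⬝ᵥ (M.map φ) *ᵥ v).im = 0 := by
    intro M hM
    have hBH : (M.map φ)ᴴ = M.map φ := by
      ext i j
      simp [Matrix.conjTranspose_apply, Matrix.map_apply, φ, Complex.conj_ofReal,
        hM.apply i j]
    have hconj : star (star v ⬝ᵥ (M.map φ) *ᵥ v) = star v ⬝ᵥ (M.map φ) *ᵥ v := by
      conv_lhs => rw [Matrix.star_dotProduct, star_star, Matrix.star_mulVec, hBH,
        ← Matrix.dotProduct_mulVec]
    have h4 := congrArg Complex.im hconj
    simp only [Complex.star_def, Complex.conj_im] at h4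
    linarith
  have haim : a.im = 0 := hherm F0 hF0symm
  have hbim : b.im = 0 := hherm A hAsymm
  -- positivity of real part of a
  set x : Fin n → ℝ := fun i => (v i).re with hx
  set y : Fin n → ℝ := fun i => (v i).im with hy
  have hare : a.re = x ⬝ᵥ F0 *ᵥ x + y ⬝ᵥ F0 *ᵥ y := by
    simp only [a, hφ, Complex.coe_algebraMap, dotProduct, Matrix.mulVec,
      Matrix.map_apply, Finset.mul_sum, Complex.re_sum, Complex.mul_re, Complex.mul_im,
      Pi.star_apply, Complex.star_def, Complex.conj_re, Complex.conj_im, Complex.ofReal_re,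
      Complex.ofReal_im, x, y]
    rw [← Finset.sum_add_distrib]
    refine Finset.sum_congr rfl fun i _ => ?_
    rw [← Finset.sum_add_distrib]
    refine Finset.sum_congr rfl fun j _ => ?_
    ring
  have hxy : x ≠ 0 ∨ y ≠ 0 := by
    by_contra h
    push_neg at h
    apply hv0
    funext i
    have h1 := congrFun h.1 i
    have h2 := congrFun h.2 i
    simp only [x, y, Pi.zero_apply] at h1 h2
    exact Complex.ext h1 h2
  have hq : ∀ w : Fin n → ℝ, 0 ≤ w ⬝ᵥ F0 *ᵥ w := by
    intro w
    have := (Matrix.posSemidef_iff_dotProduct_mulVec.mp hF0.posSemidef).2 w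
    simpa using this
  have hqpos : ∀ w : Fin n → ℝ, w ≠ 0 → 0 < w ⬝ᵥ F0 *ᵥ w := by
    intro w hw
    have := (Matrix.posDef_iff_dotProduct_mulVec.mp hF0).2 hw
    simpa using this
  have hapos : 0 < a.re := by
    rw [hare]
    rcases hxy with h | h
    · exact add_pos_of_pos_of_nonneg (hqpos x h) (hq y)
    · exact add_pos_of_nonneg_of_pos (hq x) (hqpos y h)
  -- conclude
  by_contra him
  have him' : z.im * b.re = 0 := by
    have := congrArg Complex.im key
    simpa [Complex.add_im, Complex.mul_im, haim, hbim] using this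
  have hbre : b.re = 0 := by
    rcases mul_eq_zero.1 him' with h | h
    · exact absurd h him
    · exact h
  have hb0 : b = 0 := Complex.ext hbre hbim
  have ha0 : a = 0 := by simpa [hb0] using key
  rw [ha0] at hapos
  simp at hapos
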